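/- Let 0 < p < s ≤ ∞ and -n(1-p/s) < α ≤ 0. Then every function f in the block space BL^{p,s}_{|x|^α}(ℝⁿ) belongs to the weighted Lebesgue space L^p(|x|^α dx), and ‖f‖_{L^p_{|x|^α}} ≤ C ‖f‖_{BL^{p,s}_{|x|^α}}. -/

import Mathlib

open MeasureTheory Metric ENNReal Filter
open scoped ENNReal NNReal

noncomputable section

abbrev Rn (n : ℕ) := EuclideanSpace ℝ (Fin n)

/-- A `(p,s,α)`-block: supported in a closed ball `B(x₀,r)` with
`‖a‖_{L^s} ≤ |B|^{-α/(pn)-1/p+1/s}` (with `1/s = 0` when `s = ∞`). -/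
def IsBlock (n : ℕ) (p : ℝ) (s : ℝ≥0∞) (α : ℝ) (a : Rn n → ℝ) : Prop :=
  Measurable a ∧
  ∃ x₀ : Rn n, ∃ r : ℝ, 0 < r ∧ (∀ x, x ∉ closedBall x₀ r → a x = 0) ∧
    eLpNorm a s volume ≤
      ENNReal.ofReal ((volume (closedBall x₀ r)).toReal ^ (-α / (p * n) - 1 / p + s.toReal⁻¹))

/-- A decomposition `f = Σ l k • a k` (a.e. convergence) into `(p,s,α)`-blocks with
`Σ |l k| ^ min p 1 < ∞`. -/
def IsBLDecomp (n : ℕ) (p : ℝ) (s : ℝ≥0∞) (α : ℝ)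
    (f : Rn n → ℝ) (l : ℕ → ℝ) (a : ℕ → Rn n → ℝ) : Prop :=
  (∀ k, IsBlock n p s α (a k)) ∧ Summable (fun k => |l k| ^ min p 1) ∧
  (∀ᵐ x : Rn n ∂volume, HasSum (fun k => l k * a k x) (f x))

/-- Membership in the block space `BL^{p,s}_{|x|^α}`. -/
def MemBL (n : ℕ) (p : ℝ) (s : ℝ≥0∞) (α : ℝ) (f : Rn n → ℝ) : Prop :=
  ∃ l a, IsBLDecomp n p s α f l a

/-- The quasinorm of `BL^{p,s}_{|x|^α}`:
`inf (Σ |l k| ^ min p 1)^(1/min p 1)` over all block decompositions. -/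
def BLnorm (n : ℕ) (p : ℝ) (s : ℝ≥0∞) (α : ℝ) (f : Rn n → ℝ) : ℝ :=
  sInf { c | ∃ l a, IsBLDecomp n p s α f l a ∧
    c = (∑' k, |l k| ^ min p 1) ^ (min p 1)⁻¹ }

-- helpers start
section Helpers

open Topology Set

lemma finset_rpow_le' {p : ℝ} (hp : 0 < p) (hp1 : p ≤ 1) (F : Finset ℕ) (f : ℕ → ℝ≥0∞) :
    (∑ k ∈ F, f k) ^ p ≤ ∑ k ∈ F, (f k) ^ p := by
  classical
  induction F using Finset.induction_on with
  | empty => simp [ENNReal.zero_rpow_of_pos hp]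
  | insert _ _ hx ih =>
    rename_i a s
    rw [Finset.sum_insert hx, Finset.sum_insert hx]
    exact le_trans (ENNReal.rpow_add_le_add_rpow _ _ hp.le hp1) (by gcongr)

lemma tsum_rpow_le' {p : ℝ} (hp : 0 < p) (hp1 : p ≤ 1) (f : ℕ → ℝ≥0∞) :
    (∑' k, f k) ^ p ≤ ∑' k, (f k) ^ p := by
  have htends : Tendsto (fun n => (∑ k ∈ Finset.range n, f k) ^ p) atTop
      (𝓝 ((∑' k, f k) ^ p)) :=
    (ENNReal.continuous_rpow_const.tendsto _).comp ENNReal.summable.hasSum.tendsto_sum_nat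
  refine le_of_tendsto htends (Eventually.of_forall fun n => ?_)
  exact le_trans (finset_rpow_le' hp hp1 _ f)
    (Summable.sum_le_tsum _ (fun k _ => zero_le) ENNReal.summable)

lemma enorm_le_tsum_of_hasSum' {g : ℕ → ℝ} {x : ℝ} (h : HasSum g x) :
    (‖x‖₊ : ℝ≥0∞) ≤ ∑' k, (‖g k‖₊ : ℝ≥0∞) := by
  have ht : Tendsto (fun F : Finset ℕ => (‖∑ k ∈ F, g k‖₊ : ℝ≥0∞)) atTop
      (𝓝 (‖x‖₊ : ℝ≥0∞)) :=
    ENNReal.tendsto_coe.2 ((continuous_nnnorm.tendsto x).comp h)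
  refine le_of_tendsto ht (Eventually.of_forall fun F => ?_)
  calc (‖∑ k ∈ F, g k‖₊ : ℝ≥0∞) ≤ (↑(∑ k ∈ F, ‖g k‖₊) : ℝ≥0∞) :=
        ENNReal.coe_le_coe.2 (nnnorm_sum_le F g)
    _ = ∑ k ∈ F, (‖g k‖₊ : ℝ≥0∞) := ENNReal.coe_finset_sum _ _
    _ ≤ ∑' k, (‖g k‖₊ : ℝ≥0∞) := Summable.sum_le_tsum _ (fun k _ => zero_le) ENNReal.summable

lemma weight_ball_bound (n : ℕ) (hn : 0 < n) (γ : ℝ) (hγ1 : -(n:ℝ) < γ) (hγ2 : γ ≤ 0) :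
    ∃ K : ℝ≥0∞, K ≠ ∞ ∧ ∀ (x₀ : Rn n) (r : ℝ), 0 < r →
      ∫⁻ x in closedBall x₀ r, ENNReal.ofReal (‖x‖ ^ γ) ∂volume
        ≤ K * ENNReal.ofReal (r ^ ((n : ℝ) + γ)) := by
  haveI : Nonempty (Fin n) := Fin.pos_iff_nonempty.mp hn
  set mB : ℝ≥0∞ := volume (ball (0 : Rn n) 1) with hmB
  have hmB_top : mB ≠ ∞ := measure_ball_lt_top.ne
  have hfr : Module.finrank ℝ (Rn n) = n := finrank_euclideanSpace_fin
  rcases eq_or_lt_of_le hγ2 with h0 | hneg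
  · refine ⟨mB, hmB_top, fun x₀ r hr => ?_⟩
    have h1 : ∀ x : Rn n, ENNReal.ofReal (‖x‖ ^ γ) = 1 := by
      intro x; rw [h0, Real.rpow_zero, ENNReal.ofReal_one]
    simp only [h1, lintegral_const, one_mul, Measure.restrict_apply_univ]
    rw [Measure.addHaar_closedBall _ _ hr.le, hfr, h0, add_zero,
      ← Real.rpow_natCast r n, mul_comm]
  · set q : ℝ := (n : ℝ) * γ⁻¹ with hq
    have hγne : γ ≠ 0 := hneg.ne
    have hinv : γ⁻¹ < 0 := inv_lt_zero.mpr hneg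
    have hq_lt : q < -1 := by
      have h2 := mul_lt_mul_of_neg_left hγ1 hinv
      rw [inv_mul_cancel₀ hγne] at h2
      rw [hq]; nlinarith
    set c2 : ℝ := -1 / (q + 1) with hc2
    have hc2_pos : 0 < c2 := by
      rw [hc2]; apply div_pos_of_neg_of_neg <;> linarith
    refine ⟨mB * (1 + ENNReal.ofReal c2), ENNReal.mul_ne_top hmB_top
      (by simp), fun x₀ r hr => ?_⟩
    set T : ℝ := r ^ γ with hT
    have hT_pos : 0 < T := Real.rpow_pos_of_pos hr _
    set μ := volume.restrict (closedBall x₀ r) with hμ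
    have hmeas : AEMeasurable (fun x : Rn n => ‖x‖ ^ γ) μ :=
      (measurable_norm.pow_const γ).aemeasurable
    rw [lintegral_eq_lintegral_meas_le μ
      (Eventually.of_forall fun x => Real.rpow_nonneg (norm_nonneg x) γ) hmeas]
    have hsplit : ∫⁻ t in Ioi (0:ℝ), μ {a : Rn n | t ≤ ‖a‖ ^ γ}
        ≤ (∫⁻ t in Ioc (0:ℝ) T, μ {a : Rn n | t ≤ ‖a‖ ^ γ})
          + ∫⁻ t in Ioi T, μ {a : Rn n | t ≤ ‖a‖ ^ γ} :=
      le_trans (lintegral_mono_set Ioi_subset_Ioc_union_Ioi) (lintegral_union_le _ _ _)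
    refine hsplit.trans ?_
    have h1 : (∫⁻ t in Ioc (0:ℝ) T, μ {a : Rn n | t ≤ ‖a‖ ^ γ})
        ≤ mB * ENNReal.ofReal (r ^ ((n:ℝ) + γ)) := by
      calc ∫⁻ t in Ioc (0:ℝ) T, μ {a : Rn n | t ≤ ‖a‖ ^ γ}
          ≤ ∫⁻ _ in Ioc (0:ℝ) T, μ Set.univ :=
            lintegral_mono fun t => measure_mono (subset_univ _)
        _ = μ Set.univ * ENNReal.ofReal T := by
            simp [Real.volume_Ioc]
        _ = mB * ENNReal.ofReal (r ^ ((n:ℝ) + γ)) := by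
            rw [hμ, Measure.restrict_apply_univ, Measure.addHaar_closedBall _ _ hr.le, hfr,
              mul_comm (ENNReal.ofReal _) mB, mul_assoc, ← ENNReal.ofReal_mul (by positivity),
              ← Real.rpow_natCast r n, hT, ← Real.rpow_add hr]
    have key : ∀ t ∈ Ioi (0:ℝ), μ {a : Rn n | t ≤ ‖a‖ ^ γ}
        ≤ ENNReal.ofReal (t ^ q) * mB := by
      intro t ht
      have ht' : (0:ℝ) < t := ht
      have hset : {a : Rn n | t ≤ ‖a‖ ^ γ} ⊆ closedBall 0 (t ^ γ⁻¹) := by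
        intro a ha
        simp only [mem_setOf_eq] at ha
        have hane : a ≠ 0 := by
          rintro rfl
          rw [norm_zero, Real.zero_rpow hγne] at ha
          exact absurd (lt_of_lt_of_le ht' ha) (lt_irrefl 0)
        have hna : 0 < ‖a‖ := norm_pos_iff.mpr hane
        rw [mem_closedBall_zero_iff]
        have h3 := Real.rpow_le_rpow_of_nonpos ht' ha (le_of_lt hinv)
        rwa [← Real.rpow_mul hna.le, mul_inv_cancel₀ hγne, Real.rpow_one] at h3
      calc μ {a : Rn n | t ≤ ‖a‖ ^ γ} ≤ volume (closedBall (0 : Rn n) (t ^ γ⁻¹)) :=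
            le_trans (Measure.le_iff'.1 Measure.restrict_le_self _) (measure_mono hset)
        _ = ENNReal.ofReal (t ^ q) * mB := by
            rw [Measure.addHaar_closedBall _ _ (Real.rpow_nonneg ht'.le _), hfr,
              ← Real.rpow_natCast (t ^ γ⁻¹) n, ← Real.rpow_mul ht'.le, hq, mul_comm γ⁻¹]
    have h2 : (∫⁻ t in Ioi T, μ {a : Rn n | t ≤ ‖a‖ ^ γ})
        ≤ mB * ENNReal.ofReal c2 * ENNReal.ofReal (r ^ ((n:ℝ) + γ)) := by
      calc ∫⁻ t in Ioi T, μ {a : Rn n | t ≤ ‖a‖ ^ γ}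
          ≤ ∫⁻ t in Ioi T, ENNReal.ofReal (t ^ q) * mB := by
            refine setLIntegral_mono' measurableSet_Ioi fun t ht => ?_
            exact key t (lt_trans hT_pos ht)
        _ = (∫⁻ t in Ioi T, ENNReal.ofReal (t ^ q)) * mB :=
            lintegral_mul_const'' _ ((measurable_id.pow_const q).ennreal_ofReal.aemeasurable)
        _ = ENNReal.ofReal (∫ t in Ioi T, t ^ q) * mB := by
            rw [ofReal_integral_eq_lintegral_ofReal
              (integrableOn_Ioi_rpow_of_lt hq_lt hT_pos)
              ((ae_restrict_mem measurableSet_Ioi).mono fun t ht =>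
                Real.rpow_nonneg (le_of_lt (lt_trans hT_pos ht)) q)]
        _ = mB * ENNReal.ofReal c2 * ENNReal.ofReal (r ^ ((n:ℝ) + γ)) := by
            rw [integral_Ioi_rpow_of_lt hq_lt hT_pos]
            have hTq : T ^ (q+1) = r ^ ((n:ℝ) + γ) := by
              rw [hT, ← Real.rpow_mul hr.le]
              congr 1
              rw [hq]; field_simp
            rw [show -T ^ (q+1) / (q+1) = T ^ (q+1) * c2 by rw [hc2]; ring, hTq,
              ENNReal.ofReal_mul (by positivity)]
            ring
    calc (∫⁻ t in Ioc (0:ℝ) T, μ {a : Rn n | t ≤ ‖a‖ ^ γ})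
          + ∫⁻ t in Ioi T, μ {a : Rn n | t ≤ ‖a‖ ^ γ}
        ≤ mB * ENNReal.ofReal (r ^ ((n:ℝ) + γ))
          + mB * ENNReal.ofReal c2 * ENNReal.ofReal (r ^ ((n:ℝ) + γ)) := add_le_add h1 h2
      _ = mB * (1 + ENNReal.ofReal c2) * ENNReal.ofReal (r ^ ((n:ℝ) + γ)) := by ring


lemma block_bound (n : ℕ) (hn : 0 < n) (p : ℝ) (s : ℝ≥0∞) (α : ℝ)
    (hp : 0 < p) (hps : ENNReal.ofReal p < s)
    (hα1 : -(n : ℝ) * (1 - p * s.toReal⁻¹) < α) (hα2 : α ≤ 0) :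
    ∃ C₀ : ℝ≥0∞, C₀ ≠ ∞ ∧ ∀ a : Rn n → ℝ, IsBlock n p s α a →
      (∫⁻ x, (‖a x‖₊ : ℝ≥0∞) ^ p * ENNReal.ofReal (‖x‖ ^ α) ∂volume) ≤ C₀ := by
  haveI : Nonempty (Fin n) := Fin.pos_iff_nonempty.mp hn
  set mB : ℝ≥0∞ := volume (ball (0 : Rn n) 1) with hmB
  have hmB_top : mB ≠ ∞ := measure_ball_lt_top.ne
  have hmB_pos : 0 < mB := measure_ball_pos _ _ one_pos
  set c : ℝ := mB.toReal with hc
  have hc_pos : 0 < c := ENNReal.toReal_pos hmB_pos.ne' hmB_top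
  have hfr : Module.finrank ℝ (Rn n) = n := finrank_euclideanSpace_fin
  have hn' : (0:ℝ) < n := Nat.cast_pos.mpr hn
  set e : ℝ := -α / (p * n) - 1 / p + s.toReal⁻¹ with he
  -- the weight function
  set w : Rn n → ℝ≥0∞ := fun x => ENNReal.ofReal (‖x‖ ^ α) with hw
  have hwmeas : Measurable w := (measurable_norm.pow_const α).ennreal_ofReal
  by_cases hstop : s = ∞
  · -- case s = ∞
    have hα1' : -(n:ℝ) < α := by
      rw [hstop] at hα1; simpa using hα1
    obtain ⟨K, hK_top, hK⟩ := weight_ball_bound n hn α hα1' hα2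
    refine ⟨ENNReal.ofReal (c ^ (e * p)) * K, ENNReal.mul_ne_top (by simp) hK_top,
      fun a ha => ?_⟩
    obtain ⟨hameas, x₀, r, hr, hsupp, hnorm⟩ := ha
    set B := closedBall x₀ r with hB
    set v : ℝ := (volume B).toReal with hv
    have hvol : volume B = ENNReal.ofReal (r ^ n) * mB := by
      rw [hB, Measure.addHaar_closedBall _ _ hr.le, hfr]
    have hv_eq : v = r ^ n * c := by
      rw [hv, hvol, ENNReal.toReal_mul, ENNReal.toReal_ofReal (by positivity)]
    have hv_pos : 0 < v := by rw [hv_eq]; positivity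
    -- restrict to the ball
    have hres : (∫⁻ x, (‖a x‖₊ : ℝ≥0∞) ^ p * w x ∂volume)
        = ∫⁻ x in B, (‖a x‖₊ : ℝ≥0∞) ^ p * w x ∂volume := by
      rw [hB, ← lintegral_indicator measurableSet_closedBall]
      congr 1; funext x
      rw [← hB]
      by_cases hx : x ∈ B
      · rw [Set.indicator_of_mem hx]
      · rw [Set.indicator_of_notMem hx, hsupp x hx]
        simp [ENNReal.zero_rpow_of_pos hp]
    rw [hres]
    -- a.e. bound
    have hbd : ∀ᵐ x ∂(volume.restrict B), (‖a x‖₊ : ℝ≥0∞) ^ p * w x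
        ≤ (ENNReal.ofReal (v ^ e)) ^ p * w x := by
      refine (ae_restrict_of_ae (enorm_ae_le_eLpNormEssSup a volume)).mono fun x hx => ?_
      gcongr
      refine hx.trans ?_
      rw [← eLpNorm_exponent_top, ← hstop]
      exact hnorm
    calc ∫⁻ x in B, (‖a x‖₊ : ℝ≥0∞) ^ p * w x ∂volume
        ≤ ∫⁻ x in B, (ENNReal.ofReal (v ^ e)) ^ p * w x ∂volume := lintegral_mono_ae hbd
      _ = (ENNReal.ofReal (v ^ e)) ^ p * ∫⁻ x in B, w x ∂volume :=
          lintegral_const_mul _ hwmeas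
      _ ≤ (ENNReal.ofReal (v ^ e)) ^ p * (K * ENNReal.ofReal (r ^ ((n:ℝ) + α))) := by
          gcongr; exact hK x₀ r hr
      _ = ENNReal.ofReal (c ^ (e * p)) * K := by
          rw [ENNReal.ofReal_rpow_of_nonneg (by positivity) hp.le]
          rw [show ((ENNReal.ofReal ((v ^ e) ^ p)) * (K * ENNReal.ofReal (r ^ ((n:ℝ) + α))))
            = (ENNReal.ofReal ((v ^ e) ^ p) * ENNReal.ofReal (r ^ ((n:ℝ) + α))) * K by ring]
          congr 1
          rw [← ENNReal.ofReal_mul (by positivity)]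
          congr 1
          rw [← Real.rpow_natCast r n] at hv_eq
          rw [← Real.rpow_mul hv_pos.le, hv_eq,
            Real.mul_rpow (by positivity) hc_pos.le, ← Real.rpow_mul (by positivity),
            mul_assoc, mul_comm _ (r ^ ((n:ℝ) + α)), ← mul_assoc, ← Real.rpow_add hr]
          have hexp : (n:ℝ) * (e * p) + ((n:ℝ) + α) = 0 := by
            rw [he, hstop]; simp; field_simp; ring
          rw [hexp, Real.rpow_zero, one_mul]
  · -- case s < ∞
    set S : ℝ := s.toReal with hS
    have hs0 : s ≠ 0 := (lt_of_le_of_lt zero_le hps).ne'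
    have hpS : p < S := by
      rw [hS]
      exact (ENNReal.ofReal_lt_iff_lt_toReal hp.le hstop).mp hps
    have hS_pos : 0 < S := hp.trans hpS
    set P : ℝ := S / p with hP
    have hP1 : 1 < P := (one_lt_div hp).mpr hpS
    have hconj : P.HolderConjugate (Real.conjExponent P) := Real.HolderConjugate.conjExponent hP1
    set Q : ℝ := Real.conjExponent P with hQ
    have hQpos : 0 < Q := hconj.symm.pos
    have hQinv : Q⁻¹ = 1 - p * S⁻¹ := by
      rw [← hconj.one_sub_inv, hP]
      congr 1
      rw [inv_div, div_eq_mul_inv]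
    have hα1' : -(n:ℝ) < α * Q := by
      rw [← hQinv] at hα1
      have h2 := mul_lt_mul_of_pos_right hα1 hQpos
      have h3 : -(n:ℝ) * Q⁻¹ * Q = -(n:ℝ) := by field_simp
      rwa [h3] at h2
    have hα2' : α * Q ≤ 0 := mul_nonpos_iff.mpr (Or.inr ⟨hα2, hQpos.le⟩)
    obtain ⟨K, hK_top, hK⟩ := weight_ball_bound n hn (α * Q) hα1' hα2'
    refine ⟨ENNReal.ofReal (c ^ (e * p)) * K ^ (1/Q),
      ENNReal.mul_ne_top (by simp) (ENNReal.rpow_ne_top_of_nonneg (by positivity) hK_top),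
      fun a ha => ?_⟩
    obtain ⟨hameas, x₀, r, hr, hsupp, hnorm⟩ := ha
    set B := closedBall x₀ r with hB
    set v : ℝ := (volume B).toReal with hv
    have hvol : volume B = ENNReal.ofReal (r ^ n) * mB := by
      rw [hB, Measure.addHaar_closedBall _ _ hr.le, hfr]
    have hv_eq : v = r ^ n * c := by
      rw [hv, hvol, ENNReal.toReal_mul, ENNReal.toReal_ofReal (by positivity)]
    have hv_pos : 0 < v := by rw [hv_eq]; positivity
    have hres : (∫⁻ x, (‖a x‖₊ : ℝ≥0∞) ^ p * w x ∂volume)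
        = ∫⁻ x in B, (‖a x‖₊ : ℝ≥0∞) ^ p * w x ∂volume := by
      rw [hB, ← lintegral_indicator measurableSet_closedBall]
      congr 1; funext x
      rw [← hB]
      by_cases hx : x ∈ B
      · rw [Set.indicator_of_mem hx]
      · rw [Set.indicator_of_notMem hx, hsupp x hx]
        simp [ENNReal.zero_rpow_of_pos hp]
    rw [hres]
    have hfmeas : Measurable fun x => (‖a x‖₊ : ℝ≥0∞) ^ p :=
      hameas.enorm.pow_const p
    have hpP : p * P = S := by rw [hP]; field_simp
    have hSP : S * (1/P) = p := by rw [hP]; field_simp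
    -- the L^P factor
    have hLP : (∫⁻ x in B, ((‖a x‖₊ : ℝ≥0∞) ^ p) ^ P ∂volume) ^ (1/P)
        ≤ ENNReal.ofReal (v ^ (e * p)) := by
      have h1 : ∀ x : Rn n, ((‖a x‖₊ : ℝ≥0∞) ^ p) ^ P = (‖a x‖₊ : ℝ≥0∞) ^ S := by
        intro x; rw [← ENNReal.rpow_mul, hpP]
      simp_rw [h1]
      have h2 : (∫⁻ x in B, (‖a x‖₊ : ℝ≥0∞) ^ S ∂volume)
          ≤ (eLpNorm a s volume) ^ S := by
        rw [eLpNorm_eq_lintegral_rpow_enorm_toReal hs0 hstop, ← ENNReal.rpow_mul, ← hS,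
          one_div, inv_mul_cancel₀ hS_pos.ne', ENNReal.rpow_one]
        exact setLIntegral_le_lintegral _ _
      calc (∫⁻ x in B, (‖a x‖₊ : ℝ≥0∞) ^ S ∂volume) ^ (1/P)
          ≤ ((eLpNorm a s volume) ^ S) ^ (1/P) :=
            ENNReal.rpow_le_rpow h2 (by positivity)
        _ ≤ ((ENNReal.ofReal (v ^ e)) ^ S) ^ (1/P) :=
            ENNReal.rpow_le_rpow (ENNReal.rpow_le_rpow hnorm hS_pos.le) (by positivity)
        _ = ENNReal.ofReal (v ^ (e * p)) := by
            rw [← ENNReal.rpow_mul, hSP, ENNReal.ofReal_rpow_of_nonneg (by positivity) hp.le,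
              ← Real.rpow_mul hv_pos.le]
    -- the L^Q factor
    have hLQ : (∫⁻ x in B, (w x) ^ Q ∂volume) ^ (1/Q)
        ≤ K ^ (1/Q) * ENNReal.ofReal (r ^ (((n:ℝ) + α * Q) * (1/Q))) := by
      have h1 : ∀ x : Rn n, (w x) ^ Q = ENNReal.ofReal (‖x‖ ^ (α * Q)) := by
        intro x
        rw [hw, ENNReal.ofReal_rpow_of_nonneg (by positivity) hQpos.le,
          ← Real.rpow_mul (norm_nonneg x)]
      simp_rw [h1]
      calc (∫⁻ x in B, ENNReal.ofReal (‖x‖ ^ (α * Q)) ∂volume) ^ (1/Q)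
          ≤ (K * ENNReal.ofReal (r ^ ((n:ℝ) + α * Q))) ^ (1/Q) :=
            ENNReal.rpow_le_rpow (hK x₀ r hr) (by positivity)
        _ = K ^ (1/Q) * ENNReal.ofReal (r ^ (((n:ℝ) + α * Q) * (1/Q))) := by
            rw [ENNReal.mul_rpow_of_nonneg _ _ (by positivity),
              ENNReal.ofReal_rpow_of_nonneg (by positivity) (by positivity),
              ← Real.rpow_mul (by positivity)]
    calc ∫⁻ x in B, (‖a x‖₊ : ℝ≥0∞) ^ p * w x ∂volume
        ≤ (∫⁻ x in B, ((‖a x‖₊ : ℝ≥0∞) ^ p) ^ P ∂volume) ^ (1/P)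
          * (∫⁻ x in B, (w x) ^ Q ∂volume) ^ (1/Q) :=
          ENNReal.lintegral_mul_le_Lp_mul_Lq _ hconj hfmeas.aemeasurable hwmeas.aemeasurable
      _ ≤ ENNReal.ofReal (v ^ (e * p))
          * (K ^ (1/Q) * ENNReal.ofReal (r ^ (((n:ℝ) + α * Q) * (1/Q)))) :=
          mul_le_mul' hLP hLQ
      _ = ENNReal.ofReal (c ^ (e * p)) * K ^ (1/Q) := by
          rw [show ENNReal.ofReal (v ^ (e * p))
              * (K ^ (1/Q) * ENNReal.ofReal (r ^ (((n:ℝ) + α * Q) * (1/Q))))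
            = (ENNReal.ofReal (v ^ (e * p))
               * ENNReal.ofReal (r ^ (((n:ℝ) + α * Q) * (1/Q)))) * K ^ (1/Q) by ring]
          congr 1
          rw [← ENNReal.ofReal_mul (by positivity)]
          congr 1
          rw [← Real.rpow_natCast r n] at hv_eq
          rw [hv_eq, Real.mul_rpow (by positivity) hc_pos.le,
            ← Real.rpow_mul (by positivity),
            mul_assoc, mul_comm _ (r ^ (((n:ℝ) + α * Q) * (1/Q))), ← mul_assoc,
            ← Real.rpow_add hr]
          have hexp : (n:ℝ) * (e * p) + ((n:ℝ) + α * Q) * (1/Q) = 0 := by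
            have h3 : ((n:ℝ) + α * Q) * (1/Q) = (n:ℝ) * Q⁻¹ + α := by
              field_simp
            rw [h3, hQinv, he]
            field_simp
            ring
          rw [hexp, Real.rpow_zero, one_mul]

lemma decomp_bound (n : ℕ) (hn : 0 < n) (p : ℝ) (s : ℝ≥0∞) (α : ℝ)
    (hp : 0 < p) (hps : ENNReal.ofReal p < s)
    (hα1 : -(n : ℝ) * (1 - p * s.toReal⁻¹) < α) (hα2 : α ≤ 0) :
    ∃ Cb : ℝ≥0∞, Cb ≠ ∞ ∧ ∀ (f : Rn n → ℝ) (l : ℕ → ℝ) (a : ℕ → Rn n → ℝ),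
      IsBLDecomp n p s α f l a →
      (∫⁻ x, (‖f x‖₊ : ℝ≥0∞) ^ p * ENNReal.ofReal (‖x‖ ^ α) ∂volume) ^ (1 / p)
        ≤ Cb * ENNReal.ofReal ((∑' k, |l k| ^ min p 1) ^ (min p 1)⁻¹) := by
  obtain ⟨C₀, hC₀top, hblock⟩ := block_bound n hn p s α hp hps hα1 hα2
  set w : Rn n → ℝ≥0∞ := fun x => ENNReal.ofReal (‖x‖ ^ α) with hw
  have hwmeas : Measurable w := (measurable_norm.pow_const α).ennreal_ofReal
  refine ⟨C₀ ^ (1/p), ENNReal.rpow_ne_top_of_nonneg (by positivity) hC₀top,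
    fun f l a hd => ?_⟩
  obtain ⟨hblk, hsum, hae⟩ := hd
  rcases le_or_gt p 1 with hple | hpgt
  · -- p ≤ 1
    have hmin : min p 1 = p := min_eq_left hple
    rw [hmin] at hsum ⊢
    have haebd : ∀ᵐ x : Rn n ∂volume, (‖f x‖₊ : ℝ≥0∞) ^ p * w x
        ≤ ∑' k, (ENNReal.ofReal (|l k| ^ p) * ((‖a k x‖₊ : ℝ≥0∞) ^ p * w x)) := by
      refine hae.mono fun x hx => ?_
      have h1 : (‖f x‖₊ : ℝ≥0∞) ≤ ∑' k, (‖l k * a k x‖₊ : ℝ≥0∞) :=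
        enorm_le_tsum_of_hasSum' hx
      have h2 : (‖f x‖₊ : ℝ≥0∞) ^ p ≤ ∑' k, ((‖l k * a k x‖₊ : ℝ≥0∞)) ^ p :=
        le_trans (ENNReal.rpow_le_rpow h1 hp.le) (tsum_rpow_le' hp hple _)
      have h3 : ∀ k, ((‖l k * a k x‖₊ : ℝ≥0∞)) ^ p
          = ENNReal.ofReal (|l k| ^ p) * (‖a k x‖₊ : ℝ≥0∞) ^ p := by
        intro k
        rw [nnnorm_mul, ENNReal.coe_mul, ENNReal.mul_rpow_of_nonneg _ _ hp.le,
          ← enorm_eq_nnnorm (l k), Real.enorm_eq_ofReal_abs, ENNReal.ofReal_rpow_of_nonneg (abs_nonneg _) hp.le]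
      calc (‖f x‖₊ : ℝ≥0∞) ^ p * w x
          ≤ (∑' k, ((‖l k * a k x‖₊ : ℝ≥0∞)) ^ p) * w x := mul_le_mul_left h2 _
        _ = ∑' k, (ENNReal.ofReal (|l k| ^ p) * ((‖a k x‖₊ : ℝ≥0∞) ^ p * w x)) := by
            rw [← ENNReal.tsum_mul_right]
            congr 1; funext k; rw [h3 k]; ring
    have hI : (∫⁻ x, (‖f x‖₊ : ℝ≥0∞) ^ p * w x ∂volume)
        ≤ ENNReal.ofReal (∑' k, |l k| ^ p) * C₀ := by
      calc (∫⁻ x, (‖f x‖₊ : ℝ≥0∞) ^ p * w x ∂volume)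
          ≤ ∫⁻ x, ∑' k, (ENNReal.ofReal (|l k| ^ p)
              * ((‖a k x‖₊ : ℝ≥0∞) ^ p * w x)) ∂volume := lintegral_mono_ae haebd
        _ = ∑' k, ∫⁻ x, ENNReal.ofReal (|l k| ^ p)
              * ((‖a k x‖₊ : ℝ≥0∞) ^ p * w x) ∂volume :=
            lintegral_tsum fun k =>
              (measurable_const.mul (((hblk k).1.enorm.pow_const p).mul hwmeas)).aemeasurable
        _ = ∑' k, ENNReal.ofReal (|l k| ^ p)
              * ∫⁻ x, (‖a k x‖₊ : ℝ≥0∞) ^ p * w x ∂volume := by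
            congr 1; funext k
            exact lintegral_const_mul _ (((hblk k).1.enorm.pow_const p).mul hwmeas)
        _ ≤ ∑' k, ENNReal.ofReal (|l k| ^ p) * C₀ := by
            gcongr with k
            exact hblock (a k) (hblk k)
        _ = ENNReal.ofReal (∑' k, |l k| ^ p) * C₀ := by
            rw [ENNReal.tsum_mul_right,
              ENNReal.ofReal_tsum_of_nonneg (fun k => Real.rpow_nonneg (abs_nonneg _) p) hsum]
    calc (∫⁻ x, (‖f x‖₊ : ℝ≥0∞) ^ p * w x ∂volume) ^ (1/p)
        ≤ (ENNReal.ofReal (∑' k, |l k| ^ p) * C₀) ^ (1/p) :=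
          ENNReal.rpow_le_rpow hI (by positivity)
      _ = C₀ ^ (1/p) * ENNReal.ofReal ((∑' k, |l k| ^ p) ^ p⁻¹) := by
          rw [ENNReal.mul_rpow_of_nonneg _ _ (by positivity),
            ENNReal.ofReal_rpow_of_nonneg (tsum_nonneg fun k => Real.rpow_nonneg (abs_nonneg _) p)
              (by positivity), one_div, mul_comm]
  · -- p > 1
    have hmin : min p 1 = 1 := min_eq_right hpgt.le
    rw [hmin] at hsum ⊢
    simp only [Real.rpow_one, inv_one] at hsum ⊢
    set T : ℝ := ∑' k, |l k| with hT
    set μ : Measure (Rn n) := volume.withDensity w with hμ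
    have hident : ∀ g : Rn n → ℝ, (∫⁻ x, (‖g x‖₊ : ℝ≥0∞) ^ p ∂μ)
        = ∫⁻ x, (‖g x‖₊ : ℝ≥0∞) ^ p * w x ∂volume := by
      intro g
      rw [hμ, lintegral_withDensity_eq_lintegral_mul_non_measurable volume hwmeas
        (ae_of_all _ fun x => ENNReal.ofReal_lt_top)]
      exact lintegral_congr fun x => mul_comm _ _
    set q : ℝ≥0∞ := ENNReal.ofReal p with hq
    have hq0 : q ≠ 0 := (ENNReal.ofReal_pos.2 hp).ne'
    have hqtop : q ≠ ∞ := ENNReal.ofReal_ne_top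
    have hqp : q.toReal = p := ENNReal.toReal_ofReal hp.le
    have hq1 : 1 ≤ q := by
      rw [hq, ← ENNReal.ofReal_one]
      exact ENNReal.ofReal_le_ofReal hpgt.le
    have hel : ∀ g : Rn n → ℝ, eLpNorm g q μ
        = (∫⁻ x, (‖g x‖₊ : ℝ≥0∞) ^ p * w x ∂volume) ^ (1/p) := by
      intro g
      rw [eLpNorm_eq_lintegral_rpow_enorm_toReal hq0 hqtop, hqp]
      exact congrArg (· ^ (1/p)) (hident g)
    have hblkel : ∀ k, eLpNorm (a k) q μ ≤ C₀ ^ (1/p) := by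
      intro k
      rw [hel]
      exact ENNReal.rpow_le_rpow (hblock (a k) (hblk k)) (by positivity)
    set F : ℕ → Rn n → ℝ := fun N x => ∑ k ∈ Finset.range N, l k * a k x with hF
    have hFmeas : ∀ N, AEStronglyMeasurable (F N) μ := by
      intro N
      exact (Finset.measurable_sum _ fun k _ => measurable_const.mul (hblk k).1)
        |>.aestronglyMeasurable
    have htend : ∀ᵐ x ∂μ, Tendsto (fun N => F N x) atTop (𝓝 (f x)) := by
      refine (hae.filter_mono (Measure.AbsolutelyContinuous.ae_le ?_)).mono
        fun x hx => hx.tendsto_sum_nat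
      exact withDensity_absolutelyContinuous volume w
    have hFN : ∀ N, eLpNorm (F N) q μ ≤ C₀ ^ (1/p) * ENNReal.ofReal T := by
      intro N
      have hFeq : F N = ∑ k ∈ Finset.range N, (fun x => l k * a k x) := by
        funext x; simp [hF]
      calc eLpNorm (F N) q μ
          ≤ ∑ k ∈ Finset.range N, eLpNorm (fun x => l k * a k x) q μ := by
            rw [hFeq]
            exact eLpNorm_sum_le
              (fun k _ => (measurable_const.mul (hblk k).1).aestronglyMeasurable) hq1
        _ = ∑ k ∈ Finset.range N, (‖l k‖₊ : ℝ≥0∞) * eLpNorm (a k) q μ := by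
            congr 1; funext k
            exact eLpNorm_const_smul (l k) (a k) q μ
        _ ≤ ∑ k ∈ Finset.range N, (‖l k‖₊ : ℝ≥0∞) * C₀ ^ (1/p) := by
            gcongr with k
            exact hblkel k
        _ = (∑ k ∈ Finset.range N, (‖l k‖₊ : ℝ≥0∞)) * C₀ ^ (1/p) := by
            rw [Finset.sum_mul]
        _ ≤ ENNReal.ofReal T * C₀ ^ (1/p) := by
            gcongr
            calc ∑ k ∈ Finset.range N, (‖l k‖₊ : ℝ≥0∞)
                = ENNReal.ofReal (∑ k ∈ Finset.range N, |l k|) := by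
                  rw [ENNReal.ofReal_sum_of_nonneg (fun k _ => abs_nonneg _)]
                  congr 1; funext k
                  exact Real.enorm_eq_ofReal_abs (l k)
              _ ≤ ENNReal.ofReal T :=
                  ENNReal.ofReal_le_ofReal
                    (Summable.sum_le_tsum _ (fun k _ => abs_nonneg _) hsum)
        _ = C₀ ^ (1/p) * ENNReal.ofReal T := mul_comm _ _
    have hkey : eLpNorm f q μ ≤ C₀ ^ (1/p) * ENNReal.ofReal T := by
      refine le_trans (Lp.eLpNorm_lim_le_liminf_eLpNorm hFmeas f htend) ?_
      calc atTop.liminf (fun N => eLpNorm (F N) q μ)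
          ≤ atTop.liminf (fun _ : ℕ => C₀ ^ (1/p) * ENNReal.ofReal T) :=
            liminf_le_liminf (Eventually.of_forall hFN)
        _ = C₀ ^ (1/p) * ENNReal.ofReal T := liminf_const _
    rw [← hel]
    exact hkey

end Helpers

/-- for `0 < p < s ≤ ∞`, `-n(1-p/s) < α ≤ 0`, every `f ∈ BL^{p,s}_{|x|^α}`
belongs to `L^p(|x|^α dx)` with `‖f‖_{L^p_{|x|^α}} ≤ C ‖f‖_{BL^{p,s}_{|x|^α}}`. -/



theorem BL_subset_weighted_Lp (n : ℕ) (hn : 0 < n) (p : ℝ) (s : ℝ≥0∞) (α : ℝ)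
    (hp : 0 < p) (hps : ENNReal.ofReal p < s)
    (hα1 : -(n : ℝ) * (1 - p * s.toReal⁻¹) < α) (hα2 : α ≤ 0) :
    ∃ C > (0 : ℝ), ∀ f : Rn n → ℝ, MemBL n p s α f →
      (∫⁻ x, (‖f x‖₊ : ℝ≥0∞) ^ p * ENNReal.ofReal (‖x‖ ^ α) ∂volume) < ∞ ∧
      (∫⁻ x, (‖f x‖₊ : ℝ≥0∞) ^ p * ENNReal.ofReal (‖x‖ ^ α) ∂volume) ^ (1 / p)
        ≤ ENNReal.ofReal (C * BLnorm n p s α f) := by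
  obtain ⟨Cb, hCbtop, hCb⟩ := decomp_bound n hn p s α hp hps hα1 hα2
  set C : ℝ := Cb.toReal + 1 with hC
  have hCpos : 0 < C := by
    rw [hC]; positivity
  have hCble : Cb ≤ ENNReal.ofReal C := by
    rw [hC, ← ENNReal.ofReal_toReal hCbtop]
    exact ENNReal.ofReal_le_ofReal (by simp [ENNReal.toReal_nonneg])
  refine ⟨C, hCpos, fun f hf => ?_⟩
  set J : ℝ≥0∞ :=
    (∫⁻ x, (‖f x‖₊ : ℝ≥0∞) ^ p * ENNReal.ofReal (‖x‖ ^ α) ∂volume) ^ (1 / p) with hJ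
  set Sset : Set ℝ := { c | ∃ l a, IsBLDecomp n p s α f l a ∧
    c = (∑' k, |l k| ^ min p 1) ^ (min p 1)⁻¹ } with hSset
  obtain ⟨l, a, hd⟩ := hf
  have hne : Sset.Nonempty := ⟨_, l, a, hd, rfl⟩
  have hlb : ∀ c ∈ Sset, 0 ≤ c := by
    rintro c ⟨l', a', hd', rfl⟩
    have : 0 ≤ ∑' k, |l' k| ^ min p 1 :=
      tsum_nonneg fun k => Real.rpow_nonneg (abs_nonneg _) _
    positivity
  have hInf_nonneg : 0 ≤ sInf Sset := Real.sInf_nonneg hlb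
  have hJle : ∀ c ∈ Sset, J ≤ ENNReal.ofReal (C * c) := by
    rintro c ⟨l', a', hd', rfl⟩
    calc J ≤ Cb * ENNReal.ofReal ((∑' k, |l' k| ^ min p 1) ^ (min p 1)⁻¹) :=
          hCb f l' a' hd'
      _ ≤ ENNReal.ofReal C * ENNReal.ofReal ((∑' k, |l' k| ^ min p 1) ^ (min p 1)⁻¹) :=
          mul_le_mul_left hCble _
      _ = ENNReal.ofReal (C * (∑' k, |l' k| ^ min p 1) ^ (min p 1)⁻¹) :=
          (ENNReal.ofReal_mul hCpos.le).symm
  have hmain : J ≤ ENNReal.ofReal (C * sInf Sset) := by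
    refine ENNReal.le_of_forall_pos_le_add fun ε hε _ => ?_
    have hδ : 0 < (ε : ℝ) / C := div_pos (by exact_mod_cast hε) hCpos
    obtain ⟨c, hcS, hclt⟩ := Real.lt_sInf_add_pos hne hδ
    calc J ≤ ENNReal.ofReal (C * c) := hJle c hcS
      _ ≤ ENNReal.ofReal (C * sInf Sset + C * ((ε : ℝ) / C)) := by
          apply ENNReal.ofReal_le_ofReal
          rw [← mul_add]
          exact mul_le_mul_of_nonneg_left hclt.le hCpos.le
      _ ≤ ENNReal.ofReal (C * sInf Sset) + ENNReal.ofReal (C * ((ε : ℝ) / C)) :=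
          ENNReal.ofReal_add_le
      _ = ENNReal.ofReal (C * sInf Sset) + ε := by
          rw [mul_div_cancel₀ _ hCpos.ne', ENNReal.ofReal_coe_nnreal]
  have hBL : BLnorm n p s α f = sInf Sset := rfl
  have hfin : (∫⁻ x, (‖f x‖₊ : ℝ≥0∞) ^ p * ENNReal.ofReal (‖x‖ ^ α) ∂volume) < ∞ := by
    have hJfin : J < ∞ := lt_of_le_of_lt hmain ENNReal.ofReal_lt_top
    have hIJ : (∫⁻ x, (‖f x‖₊ : ℝ≥0∞) ^ p * ENNReal.ofReal (‖x‖ ^ α) ∂volume) = J ^ p := by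
      rw [hJ, ← ENNReal.rpow_mul, one_div, inv_mul_cancel₀ hp.ne', ENNReal.rpow_one]
    rw [hIJ]
    exact ENNReal.rpow_lt_top_of_nonneg hp.le hJfin.ne
  exact ⟨hfin, by rw [hBL]; exact hmain⟩
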